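/- Let 0 < q < γ < 1 and suppose sup_{x≥0} |ω(x)|(1+x)^{-q} = ‖ω‖_q < ∞ for an odd function ω. Then the velocity u[ω](x) = -∫₀^∞ K(x,y)ω(y) dy satisfies sup_{x≥0} |u[ω](x)|(1+x)^{-(1-γ+q)} ≤ C‖ω‖_q for a constant C depending only on γ and q. -/

import Mathlib

open Real MeasureTheory Set

/-- Bernoulli-type: for `0 < γ < 1` and `0 ≤ s`, `1 - γ*s ≤ (1+s)^(-γ)`. -/
lemma aux_bern {γ : ℝ} (hγ : 0 < γ) (hγ1 : γ < 1) {s : ℝ} (hs : 0 ≤ s) :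
    1 - γ * s ≤ (1 + s) ^ (-γ) := by
  have h1s : (0:ℝ) < 1 + s := by linarith
  rcases le_or_gt (1 - γ * s) 0 with h | h
  · exact h.trans (rpow_pos_of_pos h1s _).le
  · have hA : (0:ℝ) < (1 + s) ^ γ := rpow_pos_of_pos h1s _
    have h1 : (1 + s) ^ γ ≤ 1 + γ * s :=
      rpow_one_add_le_one_add_mul_self (by linarith) hγ.le hγ1.le
    have key : (1 - γ * s) * (1 + s) ^ γ ≤ 1 := by
      nlinarith [mul_le_mul_of_nonneg_left h1 h.le, sq_nonneg (γ * s)]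
    have := mul_le_mul_of_nonneg_right key (inv_nonneg.2 hA.le)
    rw [mul_assoc, mul_inv_cancel₀ hA.ne', mul_one, one_mul] at this
    rwa [Real.rpow_neg h1s.le]

/-- Tail bound: for `0 < a`, `0 ≤ d`, `a^(-γ) - (a+d)^(-γ) ≤ γ * d * a^(-γ-1)`. -/
lemma aux_tail {γ : ℝ} (hγ : 0 < γ) (hγ1 : γ < 1) {a d : ℝ} (ha : 0 < a) (hd : 0 ≤ d) :
    a ^ (-γ) - (a + d) ^ (-γ) ≤ γ * d * a ^ (-γ - 1) := by
  have hda : 0 ≤ d / a := div_nonneg hd ha.le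
  have h1 : (1:ℝ) - γ * (d / a) ≤ (1 + d / a) ^ (-γ) := aux_bern hγ hγ1 hda
  have hrw : a + d = a * (1 + d / a) := by field_simp
  have h2 : (a + d) ^ (-γ) = a ^ (-γ) * (1 + d / a) ^ (-γ) := by
    rw [hrw, Real.mul_rpow ha.le (by linarith)]
  have h3 : a ^ (-γ) * (1 - γ * (d / a)) ≤ (a + d) ^ (-γ) := by
    rw [h2]
    exact mul_le_mul_of_nonneg_left h1 (rpow_nonneg ha.le _)
  have h4 : a ^ (-γ) * (γ * (d / a)) = γ * d * a ^ (-γ - 1) := by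
    rw [show -γ - 1 = -γ + (-1) by ring, Real.rpow_add ha, Real.rpow_neg_one]
    field_simp
  nlinarith [h3, h4]

/-- `(1+y)^q ≤ 2^q * (1 + y^q)` for `y ≥ 0`, `q ≥ 0`. -/
lemma aux_pow {q : ℝ} (hq : 0 ≤ q) {y : ℝ} (hy : 0 ≤ y) :
    (1 + y) ^ q ≤ 2 ^ q * (1 + y ^ q) := by
  rcases le_total y 1 with h | h
  · have h1 : (1 + y) ^ q ≤ (2:ℝ) ^ q := Real.rpow_le_rpow (by linarith) (by linarith) hq
    have h2 : (0:ℝ) ≤ y ^ q := rpow_nonneg hy _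
    nlinarith [Real.rpow_pos_of_pos (show (0:ℝ) < 2 by norm_num) q]
  · have h1 : (1 + y) ^ q ≤ (2 * y) ^ q := Real.rpow_le_rpow (by linarith) (by linarith) hq
    rw [Real.mul_rpow (by norm_num) hy] at h1
    have h2 : (0:ℝ) < 2 ^ q := Real.rpow_pos_of_pos (by norm_num) q
    nlinarith

/-- Integral of `(x - y)^(-γ)` over `Ioo 0 x`. -/
lemma aux_int1 {γ : ℝ} (hγ : 0 < γ) (hγ1 : γ < 1) {x : ℝ} (hx : 0 < x) :
    ∫ y in Ioo (0:ℝ) x, (x - y) ^ (-γ) = x ^ (1 - γ) / (1 - γ) := by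
  rw [← integral_Ioc_eq_integral_Ioo, ← intervalIntegral.integral_of_le hx.le,
    intervalIntegral.integral_comp_sub_left (fun t => t ^ (-γ)) x, sub_self, sub_zero,
    integral_rpow (Or.inl (by linarith))]
  rw [Real.zero_rpow (show -γ + 1 ≠ 0 by intro h; linarith)]
  ring_nf

/-- Integral of `(y - x)^(-γ)` over `Ioo x (2x)`. -/
lemma aux_int2 {γ : ℝ} (hγ : 0 < γ) (hγ1 : γ < 1) {x : ℝ} (hx : 0 < x) :
    ∫ y in Ioo x (2*x), (y - x) ^ (-γ) = x ^ (1 - γ) / (1 - γ) := by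
  rw [← integral_Ioc_eq_integral_Ioo, ← intervalIntegral.integral_of_le (by linarith),
    intervalIntegral.integral_comp_sub_right (fun t => t ^ (-γ)) x, sub_self,
    show 2*x - x = x by ring, integral_rpow (Or.inl (by linarith))]
  rw [Real.zero_rpow (show -γ + 1 ≠ 0 by intro h; linarith)]
  ring_nf

lemma aux_intg1 {γ x : ℝ} (hγ1 : γ < 1) (hx : 0 < x) :
    IntegrableOn (fun y => (x - y) ^ (-γ)) (Ioo 0 x) := by
  have h := (intervalIntegral.intervalIntegrable_rpow' (show (-1:ℝ) < -γ by linarith)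
    (a := 0) (b := x)).comp_sub_left x
  simp only [sub_zero, sub_self] at h
  exact (intervalIntegrable_iff_integrableOn_Ioo_of_le hx.le).mp h.symm

lemma aux_intg2 {γ x : ℝ} (hγ1 : γ < 1) (hx : 0 < x) :
    IntegrableOn (fun y => (y - x) ^ (-γ)) (Ioo x (2*x)) := by
  have h := (intervalIntegral.intervalIntegrable_rpow' (show (-1:ℝ) < -γ by linarith)
    (a := 0) (b := x)).comp_sub_right x
  rw [zero_add] at h
  rw [show 2*x = x + x by ring]
  exact (intervalIntegrable_iff_integrableOn_Ioo_of_le (by linarith)).mp h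

/-- The kernel is nonnegative and bounded by `|y-x|^(-γ)`. -/
lemma aux_K {γ : ℝ} (hγ : 0 < γ) {x y : ℝ} (hx : 0 < x) (hy : 0 < y) (hne : y ≠ x) :
    |1 / |y - x| ^ γ - 1 / |x + y| ^ γ| ≤ |y - x| ^ (-γ) := by
  have h1 : (0:ℝ) < |y - x| := abs_pos.2 (sub_ne_zero.2 hne)
  have h2 : |y - x| ≤ |x + y| := by
    rw [abs_of_pos (show (0:ℝ) < x + y by linarith)]
    rw [abs_le]; constructor <;> linarith
  have h3 : |y - x| ^ γ ≤ |x + y| ^ γ := Real.rpow_le_rpow h1.le h2 hγ.le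
  have h4 : (0:ℝ) < |y - x| ^ γ := Real.rpow_pos_of_pos h1 _
  have h5 : (0:ℝ) < |x + y| ^ γ := lt_of_lt_of_le h4 h3
  have h6 : 1 / |x + y| ^ γ ≤ 1 / |y - x| ^ γ := one_div_le_one_div_of_le h4 h3
  have h7 : (0:ℝ) < 1 / |x + y| ^ γ := by positivity
  rw [abs_of_nonneg (by linarith), Real.rpow_neg h1.le, ← one_div]
  linarith

/-- Sharper tail bound on the kernel for `y > 2x`. -/
lemma aux_K3 {γ : ℝ} (hγ : 0 < γ) (hγ1 : γ < 1) {x y : ℝ} (hx : 0 < x) (hyy : 2 * x < y) :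
    |1 / |y - x| ^ γ - 1 / |x + y| ^ γ| ≤ γ * (2 * x) * (y - x) ^ (-γ - 1) := by
  have hyx : 0 < y - x := by linarith
  have hK : 1 / |y - x| ^ γ - 1 / |x + y| ^ γ = (y - x) ^ (-γ) - (x + y) ^ (-γ) := by
    rw [abs_of_pos hyx, abs_of_pos (show (0:ℝ) < x + y by linarith),
        Real.rpow_neg hyx.le, Real.rpow_neg (show (0:ℝ) ≤ x + y by linarith), one_div, one_div]
  have hnn : (x + y) ^ (-γ) ≤ (y - x) ^ (-γ) :=
    Real.rpow_le_rpow_of_nonpos hyx (by linarith) (by linarith)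
  have htail : (y - x) ^ (-γ) - (x + y) ^ (-γ) ≤ γ * (2 * x) * (y - x) ^ (-γ - 1) := by
    have h := aux_tail hγ hγ1 hyx (show (0:ℝ) ≤ 2 * x by linarith)
    rwa [show y - x + 2 * x = x + y by ring] at h
  rw [hK, abs_of_nonneg (by linarith)]
  exact htail

theorem velocity_norm_estimate (γ q : ℝ) (hγ : 0 < γ) (hγ1 : γ < 1)
    (hq : 0 < q) (hqγ : q < γ) :
    ∃ C > 0, ∀ (ω : ℝ → ℝ) (M : ℝ), Measurable ω →
      (∀ x, ω (-x) = -ω x) →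
      (∀ x, 0 ≤ x → |ω x| ≤ M * (1 + x) ^ q) →
      (∀ x > (0:ℝ), IntegrableOn
        (fun y => (1 / |y - x| ^ γ - 1 / |x + y| ^ γ) * ω y) (Set.Ioi (0 : ℝ))) →
      ∀ x, 0 ≤ x →
        |-(∫ y in Set.Ioi (0 : ℝ), (1 / |y - x| ^ γ - 1 / |x + y| ^ γ) * ω y)|
          ≤ C * M * (1 + x) ^ (1 - γ + q) := by
  have h1γ : (0:ℝ) < 1 - γ := by linarith
  have hγq : (0:ℝ) < γ - q := by linarith
  refine ⟨1/(1-γ) + 2^q/(1-γ) + γ * 2^(γ+1) * 2^q * 2 * ((2:ℝ)^(-γ)/γ + 2^(q-γ)/(γ-q)),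
    by positivity, ?_⟩
  intro ω M hmeas hodd hbound hint x hx
  have hM : 0 ≤ M := by
    have h0 := hbound 0 le_rfl
    simp only [add_zero, Real.one_rpow, mul_one] at h0
    exact (abs_nonneg _).trans h0
  have hCpos : (0:ℝ) < 1/(1-γ) + 2^q/(1-γ) + γ * 2^(γ+1) * 2^q * 2 * ((2:ℝ)^(-γ)/γ + 2^(q-γ)/(γ-q)) := by positivity
  rcases hx.eq_or_lt with rfl | hxpos
  · simp only [sub_zero, zero_add, sub_self, zero_mul, integral_zero, neg_zero, abs_zero]
    exact mul_nonneg (mul_nonneg hCpos.le hM) (Real.rpow_nonneg (by norm_num) _)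
  -- main case : 0 < x
  set F : ℝ → ℝ := fun y => (1 / |y - x| ^ γ - 1 / |x + y| ^ γ) * ω y with hF
  have hFint : IntegrableOn F (Ioi 0) := hint x hxpos
  have hFabs : IntegrableOn (fun y => |F y|) (Ioi 0) := hFint.abs
  have hsub1 : Ioc (0:ℝ) x ⊆ Ioi 0 := Ioc_subset_Ioi_self
  have hsub2 : Ioc x (2*x) ⊆ Ioi (0:ℝ) := fun y hy => lt_trans hxpos hy.1
  have hsub3 : Ioi (2*x) ⊆ Ioi (0:ℝ) := Ioi_subset_Ioi (by linarith)
  -- split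
  have hsplit : ∫ y in Ioi (0:ℝ), |F y| =
      (∫ y in Ioc (0:ℝ) x, |F y|) + ((∫ y in Ioc x (2*x), |F y|) + ∫ y in Ioi (2*x), |F y|) := by
    have e1 : Ioc x (2*x) ∪ Ioi (2*x) = Ioi x := Ioc_union_Ioi_eq_Ioi (by linarith)
    have e2 : Ioc (0:ℝ) x ∪ Ioi x = Ioi 0 := Ioc_union_Ioi_eq_Ioi hxpos.le
    rw [← e2, setIntegral_union Ioc_disjoint_Ioi_same measurableSet_Ioi
        (hFabs.mono_set hsub1) (hFabs.mono_set (e2 ▸ subset_union_right)),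
      ← e1, setIntegral_union Ioc_disjoint_Ioi_same measurableSet_Ioi
        (hFabs.mono_set hsub2) (hFabs.mono_set hsub3)]
  -- region 1
  have hI1 : ∫ y in Ioc (0:ℝ) x, |F y| ≤ M * (1+x)^q * (x^(1-γ)/(1-γ)) := by
    rw [integral_Ioc_eq_integral_Ioo]
    have hgint : IntegrableOn (fun y => (x - y)^(-γ) * (M * (1+x)^q)) (Ioo 0 x) :=
      (aux_intg1 hγ1 hxpos).mul_const _
    have hmono := setIntegral_mono_on
      ((hFabs.mono_set hsub1).mono_set Ioo_subset_Ioc_self) hgint measurableSet_Ioo ?_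
    · calc ∫ y in Ioo (0:ℝ) x, |F y| ≤ ∫ y in Ioo (0:ℝ) x, (x - y)^(-γ) * (M * (1+x)^q) := hmono
        _ = (x^(1-γ)/(1-γ)) * (M * (1+x)^q) := by
            rw [integral_mul_const, aux_int1 hγ hγ1 hxpos]
        _ = M * (1+x)^q * (x^(1-γ)/(1-γ)) := by ring
    · intro y hy
      have hy0 : 0 < y := hy.1
      have hyx : y < x := hy.2
      have hKb := aux_K hγ hxpos hy0 (ne_of_lt hyx)
      have heq : |y - x| = x - y := by rw [abs_sub_comm, abs_of_pos (by linarith)]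
      have hKb2 : |1 / |y - x| ^ γ - 1 / |x + y| ^ γ| ≤ (x - y) ^ (-γ) :=
        hKb.trans_eq (by rw [heq])
      rw [hF, abs_mul]
      apply mul_le_mul hKb2 ?_ (abs_nonneg _) (Real.rpow_nonneg (by linarith) _)
      exact (hbound y hy0.le).trans
        (mul_le_mul_of_nonneg_left (Real.rpow_le_rpow (by linarith) (by linarith) hq.le) hM)
  -- region 2
  have hI2 : ∫ y in Ioc x (2*x), |F y| ≤ M * (1+2*x)^q * (x^(1-γ)/(1-γ)) := by
    rw [integral_Ioc_eq_integral_Ioo]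
    have hgint : IntegrableOn (fun y => (y - x)^(-γ) * (M * (1+2*x)^q)) (Ioo x (2*x)) :=
      (aux_intg2 hγ1 hxpos).mul_const _
    have hmono := setIntegral_mono_on
      ((hFabs.mono_set hsub2).mono_set Ioo_subset_Ioc_self) hgint measurableSet_Ioo ?_
    · calc ∫ y in Ioo x (2*x), |F y| ≤ ∫ y in Ioo x (2*x), (y - x)^(-γ) * (M * (1+2*x)^q) := hmono
        _ = (x^(1-γ)/(1-γ)) * (M * (1+2*x)^q) := by
            rw [integral_mul_const, aux_int2 hγ hγ1 hxpos]
        _ = M * (1+2*x)^q * (x^(1-γ)/(1-γ)) := by ring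
    · intro y hy
      have hyx : x < y := hy.1
      have hy2 : y < 2*x := hy.2
      have hKb := aux_K hγ hxpos (by linarith) (ne_of_gt hyx)
      have heq : |y - x| = y - x := abs_of_pos (by linarith)
      have hKb2 : |1 / |y - x| ^ γ - 1 / |x + y| ^ γ| ≤ (y - x) ^ (-γ) :=
        hKb.trans_eq (by rw [heq])
      rw [hF, abs_mul]
      apply mul_le_mul hKb2 ?_ (abs_nonneg _) (Real.rpow_nonneg (by linarith) _)
      exact (hbound y (by linarith)).trans
        (mul_le_mul_of_nonneg_left (Real.rpow_le_rpow (by linarith) (by linarith) hq.le) hM)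
  -- region 3
  have hexp1 : (-γ - 1 : ℝ) < -1 := by linarith
  have hexp2 : (-γ - 1 + q : ℝ) < -1 := by linarith
  have h2x : (0:ℝ) < 2*x := by linarith
  have hg1 : IntegrableOn (fun y : ℝ => y ^ (-γ-1)) (Ioi (2*x)) :=
    integrableOn_Ioi_rpow_of_lt hexp1 h2x
  have hg2 : IntegrableOn (fun y : ℝ => y ^ (-γ-1+q)) (Ioi (2*x)) :=
    integrableOn_Ioi_rpow_of_lt hexp2 h2x
  have hI3 : ∫ y in Ioi (2*x), |F y| ≤
      γ * 2^(γ+1) * 2^q * 2 * M * ((2:ℝ)^(-γ)/γ * x^(1-γ) + 2^(q-γ)/(γ-q) * x^(1-γ+q)) := by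
    have hgint : IntegrableOn
        (fun y : ℝ => (γ * 2^(γ+1) * 2^q * 2 * M * x) * (y^(-γ-1) + y^(-γ-1+q))) (Ioi (2*x)) :=
      (hg1.add hg2).const_mul _
    have hmono := setIntegral_mono_on (hFabs.mono_set hsub3) hgint measurableSet_Ioi ?_
    · calc ∫ y in Ioi (2*x), |F y|
          ≤ ∫ y in Ioi (2*x), (γ * 2^(γ+1) * 2^q * 2 * M * x) * (y^(-γ-1) + y^(-γ-1+q)) := hmono
        _ = (γ * 2^(γ+1) * 2^q * 2 * M * x) *
            ((∫ y in Ioi (2*x), y^(-γ-1)) + ∫ y in Ioi (2*x), y^(-γ-1+q)) := by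
            rw [integral_const_mul, integral_add hg1 hg2]
        _ = (γ * 2^(γ+1) * 2^q * 2 * M * x) *
            ((2*x)^(-γ)/γ + (2*x)^(q-γ)/(γ-q)) := by
            rw [integral_Ioi_rpow_of_lt hexp1 h2x, integral_Ioi_rpow_of_lt hexp2 h2x]
            rw [show (-γ-1+1 : ℝ) = -γ by ring, show (-γ-1+q+1 : ℝ) = q-γ by ring]
            rw [show (-(2*x)^(-γ)/(-γ)) = (2*x)^(-γ)/γ by field_simp,
                show (-(2*x)^(q-γ)/(q-γ)) = (2*x)^(q-γ)/(γ-q) by rw [div_eq_div_iff (by linarith) (by linarith)]; ring]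
        _ = γ * 2^(γ+1) * 2^q * 2 * M * ((2:ℝ)^(-γ)/γ * x^(1-γ) + 2^(q-γ)/(γ-q) * x^(1-γ+q)) := by
            have hx1 : x * (2*x)^(-γ) = 2^(-γ) * x^(1-γ) := by
              rw [Real.mul_rpow (by norm_num) hxpos.le, show (1-γ:ℝ) = 1 + (-γ) by ring,
                Real.rpow_add hxpos, Real.rpow_one]
              ring
            have hx2 : x * (2*x)^(q-γ) = 2^(q-γ) * x^(1-γ+q) := by
              rw [Real.mul_rpow (by norm_num) hxpos.le, show (1-γ+q:ℝ) = 1 + (q-γ) by ring,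
                Real.rpow_add hxpos, Real.rpow_one]
              ring
            linear_combination (γ * 2^(γ+1) * 2^q * 2 * M / γ) * hx1 +
              (γ * 2^(γ+1) * 2^q * 2 * M / (γ-q)) * hx2
    · intro y hy
      have hy2x : 2*x < y := hy
      have hy0 : 0 < y := lt_trans h2x hy2x
      have hyx : 0 < y - x := by linarith
      have hK3 := aux_K3 hγ hγ1 hxpos hy2x
      have hhalf : (y - x)^(-γ-1) ≤ 2^(γ+1) * y^(-γ-1) := by
        have h1 : (y/2)^(-γ-1) = 2^(γ+1) * y^(-γ-1) := by
          rw [show (-γ-1:ℝ) = -(γ+1) by ring, Real.div_rpow hy0.le (by norm_num : (0:ℝ) ≤ 2),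
            Real.rpow_neg (show (0:ℝ) ≤ 2 by norm_num)]
          rw [div_inv_eq_mul]
          ring
        calc (y - x)^(-γ-1) ≤ (y/2)^(-γ-1) :=
              Real.rpow_le_rpow_of_nonpos (by linarith) (by linarith) (by linarith)
          _ = 2^(γ+1) * y^(-γ-1) := h1
      have hω : |ω y| ≤ M * (2^q * (1 + y^q)) :=
        (hbound y hy0.le).trans (mul_le_mul_of_nonneg_left (aux_pow hq.le hy0.le) hM)
      calc |F y| = |1 / |y - x| ^ γ - 1 / |x + y| ^ γ| * |ω y| := by rw [hF, abs_mul]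
        _ ≤ (γ * (2*x) * (y - x)^(-γ-1)) * (M * (2^q * (1 + y^q))) :=
            mul_le_mul hK3 hω (abs_nonneg _) (by positivity)
        _ ≤ (γ * (2*x) * (2^(γ+1) * y^(-γ-1))) * (M * (2^q * (1 + y^q))) := by
            apply mul_le_mul_of_nonneg_right ?_ (by positivity)
            exact mul_le_mul_of_nonneg_left hhalf (by positivity)
        _ = (γ * 2^(γ+1) * 2^q * 2 * M * x) * (y^(-γ-1) + y^(-γ-1) * y^q) := by ring
        _ = (γ * 2^(γ+1) * 2^q * 2 * M * x) * (y^(-γ-1) + y^(-γ-1+q)) := by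
            rw [Real.rpow_add hy0]
  -- final assembly
  have h1xpos : (0:ℝ) < 1 + x := by linarith
  have hea : x^(1-γ) ≤ (1+x)^(1-γ) := Real.rpow_le_rpow hxpos.le (by linarith) h1γ.le
  have heb : (1+x)^(1-γ) ≤ (1+x)^(1-γ+q) :=
    Real.rpow_le_rpow_of_exponent_le (by linarith) (by linarith)
  have hec : x^(1-γ+q) ≤ (1+x)^(1-γ+q) := Real.rpow_le_rpow hxpos.le (by linarith) (by linarith)
  have h_a : (1+x)^q * x^(1-γ) ≤ (1+x)^(1-γ+q) := by
    calc (1+x)^q * x^(1-γ) ≤ (1+x)^q * (1+x)^(1-γ) :=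
          mul_le_mul_of_nonneg_left hea (Real.rpow_nonneg (by linarith) _)
      _ = (1+x)^(1-γ+q) := by
          rw [← Real.rpow_add h1xpos, show q + (1-γ) = 1-γ+q by ring]
  have h_b : (1+2*x)^q ≤ 2^q * (1+x)^q := by
    calc (1+2*x)^q ≤ (2*(1+x))^q := Real.rpow_le_rpow (by linarith) (by linarith) hq.le
      _ = 2^q * (1+x)^q := Real.mul_rpow (by norm_num) (by linarith)
  have hb1 : M * (1+x)^q * (x^(1-γ)/(1-γ)) ≤ 1/(1-γ) * M * (1+x)^(1-γ+q) := by
    calc M * (1+x)^q * (x^(1-γ)/(1-γ)) = (M * ((1+x)^q * x^(1-γ)))/(1-γ) := by ring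
      _ ≤ (M * (1+x)^(1-γ+q))/(1-γ) :=
          (div_le_div_iff_of_pos_right h1γ).mpr (mul_le_mul_of_nonneg_left h_a hM)
      _ = 1/(1-γ) * M * (1+x)^(1-γ+q) := by ring
  have hb2 : M * (1+2*x)^q * (x^(1-γ)/(1-γ)) ≤ 2^q/(1-γ) * M * (1+x)^(1-γ+q) := by
    calc M * (1+2*x)^q * (x^(1-γ)/(1-γ))
        ≤ M * (2^q * (1+x)^q) * (x^(1-γ)/(1-γ)) := by
          apply mul_le_mul_of_nonneg_right (mul_le_mul_of_nonneg_left h_b hM) (by positivity)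
      _ = ((2^q * M) * ((1+x)^q * x^(1-γ)))/(1-γ) := by ring
      _ ≤ ((2^q * M) * (1+x)^(1-γ+q))/(1-γ) :=
          (div_le_div_iff_of_pos_right h1γ).mpr (mul_le_mul_of_nonneg_left h_a (by positivity))
      _ = 2^q/(1-γ) * M * (1+x)^(1-γ+q) := by ring
  have hb3 : γ * 2^(γ+1) * 2^q * 2 * M * ((2:ℝ)^(-γ)/γ * x^(1-γ) + 2^(q-γ)/(γ-q) * x^(1-γ+q))
      ≤ (γ * 2^(γ+1) * 2^q * 2 * ((2:ℝ)^(-γ)/γ + 2^(q-γ)/(γ-q))) * M * (1+x)^(1-γ+q) := by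
    have t1 : x^(1-γ) ≤ (1+x)^(1-γ+q) := hea.trans heb
    calc γ * 2^(γ+1) * 2^q * 2 * M * ((2:ℝ)^(-γ)/γ * x^(1-γ) + 2^(q-γ)/(γ-q) * x^(1-γ+q))
        ≤ γ * 2^(γ+1) * 2^q * 2 * M *
          ((2:ℝ)^(-γ)/γ * (1+x)^(1-γ+q) + 2^(q-γ)/(γ-q) * (1+x)^(1-γ+q)) := by
          apply mul_le_mul_of_nonneg_left ?_ (by positivity)
          exact add_le_add (mul_le_mul_of_nonneg_left t1 (by positivity))
            (mul_le_mul_of_nonneg_left hec (by positivity))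
      _ = (γ * 2^(γ+1) * 2^q * 2 * ((2:ℝ)^(-γ)/γ + 2^(q-γ)/(γ-q))) * M * (1+x)^(1-γ+q) := by
          ring
  calc |-(∫ y in Set.Ioi (0:ℝ), F y)| = |∫ y in Set.Ioi (0:ℝ), F y| := abs_neg _
    _ ≤ ∫ y in Ioi (0:ℝ), |F y| := by
        have h := norm_integral_le_integral_norm (μ := volume.restrict (Ioi 0)) F
        simpa only [Real.norm_eq_abs] using h
    _ = (∫ y in Ioc (0:ℝ) x, |F y|) + ((∫ y in Ioc x (2*x), |F y|) + ∫ y in Ioi (2*x), |F y|) :=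
        hsplit
    _ ≤ M * (1+x)^q * (x^(1-γ)/(1-γ)) + (M * (1+2*x)^q * (x^(1-γ)/(1-γ)) +
        γ * 2^(γ+1) * 2^q * 2 * M * ((2:ℝ)^(-γ)/γ * x^(1-γ) + 2^(q-γ)/(γ-q) * x^(1-γ+q))) :=
        add_le_add hI1 (add_le_add hI2 hI3)
    _ ≤ 1/(1-γ) * M * (1+x)^(1-γ+q) + (2^q/(1-γ) * M * (1+x)^(1-γ+q) +
        (γ * 2^(γ+1) * 2^q * 2 * ((2:ℝ)^(-γ)/γ + 2^(q-γ)/(γ-q))) * M * (1+x)^(1-γ+q)) :=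
        add_le_add hb1 (add_le_add hb2 hb3)
    _ = (1/(1-γ) + 2^q/(1-γ) + γ * 2^(γ+1) * 2^q * 2 * ((2:ℝ)^(-γ)/γ + 2^(q-γ)/(γ-q))) * M *
        (1+x)^(1-γ+q) := by ring
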